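/- If X is a narrow topological group and Y ⊆ X is a subgroup with the subspace topology, then Y is narrow. -/

import Mathlib

open Pointwise

theorem stmt18 (X : Type*) [Group X] [TopologicalSpace X] [IsTopologicalGroup X]
    (hX : ∀ U ∈ nhds (1 : X), ∃ S : Set X, S.Countable ∧ S * U = Set.univ)
    (Y : Subgroup X) :
    ∀ U ∈ nhds (1 : Y), ∃ S : Set Y, S.Countable ∧ S * U = Set.univ := by
  classical
  intro U hU
  -- get V in nhds (1:X) with preimage ⊆ U
  rw [nhds_subtype] at hU
  obtain ⟨V, hV, hVU⟩ := hU
  -- split: W₀ with W₀ * W₀ ⊆ V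
  obtain ⟨W₀, hW₀, hsplit⟩ := exists_nhds_one_split hV
  set W : Set X := W₀ ∩ W₀⁻¹ with hWdef
  have hW : W ∈ nhds (1 : X) := Filter.inter_mem hW₀ (by simpa using inv_mem_nhds_one X hW₀)
  obtain ⟨S, hScount, hScov⟩ := hX W hW
  -- choice function
  have key : ∀ s : X, (∃ y : Y, (y : X) ∈ {s} * W) → ∃ y : Y, (y : X) ∈ {s} * W := fun _ h => h
  let g : X → Y := fun s => if h : ∃ y : Y, (y : X) ∈ {s} * W then h.choose else 1
  refine ⟨g '' S, hScount.image g, ?_⟩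
  ext y
  simp only [Set.mem_univ, iff_true]
  have hy : (y : X) ∈ S * W := by rw [hScov]; trivial
  obtain ⟨s, hs, w, hw, hsw⟩ := hy
  have hex : ∃ y' : Y, (y' : X) ∈ {s} * W := ⟨y, s, rfl, w, hw, hsw⟩
  have hgs : ((g s : Y) : X) ∈ {s} * W := by
    simp only [g, dif_pos hex]
    exact hex.choose_spec
  obtain ⟨s', hs', w', hw', hsw'⟩ := hgs
  rw [Set.mem_singleton_iff] at hs'
  rw [hs'] at hsw'
  -- (g s)⁻¹ * y ∈ V
  have hval : ((g s)⁻¹ * y : Y) ∈ U := by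
    apply hVU
    show (((g s)⁻¹ * y : Y) : X) ∈ V
    have : (((g s)⁻¹ * y : Y) : X) = w'⁻¹ * w := by
      push_cast
      rw [← hsw, ← hsw']
      group
    rw [this]
    exact hsplit _ (hw'.2) _ hw.1
  exact ⟨g s, Set.mem_image_of_mem g hs, (g s)⁻¹ * y, hval, by group⟩
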